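/- arXiv:2001.09721 — 3 statements merged into one kernel-verified Lean document; each statement's English description precedes it below -/
import Mathlib

section
/- Let K be a number field with ring of integers O, and let f ∈ O[X] with f(0) ≠ 0 be such that 0 is not a periodic point of f (i.e., f^(k)(0) ≠ 0 for all k ≥ 1). For α ∈ O and integers m > n ≥ 0 with f^(n)(α) ≠ 0, if f^(n)(α) = u · f^(m)(α) for some u ∈ O, then the ideal generated by f^(m)(α) divides the ideal generated by f^(m-n)(0). -/
open NumberField

lemma iter_dvd_sub {R : Type*} [CommRing R] (f : Polynomial R) (b x y : R)
    (h : b ∣ x - y) (k : ℕ) :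
    b ∣ (fun z => f.eval z)^[k] x - (fun z => f.eval z)^[k] y := by
  induction k with
  | zero => simpa using h
  | succ k ih =>
      rw [Function.iterate_succ_apply', Function.iterate_succ_apply']
      exact dvd_trans ih (Polynomial.sub_dvd_eval_sub _ _ f)

/-- If `f ∈ O[X]` has `f(0) ≠ 0`, `0` is not periodic, `f^(n)(α) ≠ 0` and
`f^(n)(α) = u · f^(m)(α)` with `u ∈ O` and `m > n ≥ 0`, then the ideal generated by
`f^(m)(α)` divides the ideal generated by `f^(m-n)(0)`. -/
theorem span_iterate_dvd_span_iterate_zero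
    (K : Type*) [Field K] [NumberField K]
    (f : Polynomial (𝓞 K)) (hf0 : f.eval 0 ≠ 0)
    (hper : ∀ k : ℕ, 1 ≤ k → (fun x => f.eval x)^[k] (0 : 𝓞 K) ≠ 0)
    (α : 𝓞 K) (m n : ℕ) (hmn : n < m)
    (hn0 : (fun x => f.eval x)^[n] α ≠ 0)
    (u : 𝓞 K) (hu : (fun x => f.eval x)^[n] α = u * (fun x => f.eval x)^[m] α) :
    Ideal.span {(fun x => f.eval x)^[m] α} ∣
      Ideal.span {(fun x => f.eval x)^[m - n] (0 : 𝓞 K)} := by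
  suffices h : (fun x => f.eval x)^[m] α ∣ (fun x => f.eval x)^[m - n] (0 : 𝓞 K) by
    obtain ⟨c, hc⟩ := h
    exact ⟨Ideal.span {c}, by rw [hc, Ideal.span_singleton_mul_span_singleton]⟩
  set F := fun x => f.eval x
  set b := F^[m] α with hb
  have hm : F^[m] α = F^[m-n] (F^[n] α) := by
    rw [← Function.iterate_add_apply]
    congr 1
    omega
  have hdvd : b ∣ F^[n] α - 0 := by
    rw [sub_zero, hu]
    exact ⟨u, mul_comm u b⟩
  have := iter_dvd_sub f b (F^[n] α) 0 hdvd (m - n)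
  rw [← hm, ← hb] at this
  have : b ∣ b - (b - F^[m-n] 0) := dvd_sub dvd_rfl this
  simpa using this
end

section
/- Let K be a number field of degree d with r+1 archimedean places and unit rank r ≥ 1, regulator R, and let ε₁, …, ε_r be a fundamental system of units with max_i h(ε_i) ≤ A·R for a constant A. Then for every nonzero α ∈ O_K and every integer n ≥ 1 there exists a unit ε ∈ O_K^* such that for every archimedean place v: |log|ε^n α|_v − (1/d)·log N(α)| ≤ (1/2)·A·n·d²·R, where N(α) is the absolute norm of the ideal generated by α. -/
open NumberField IsDedekindDomain

/-- The places of a number field `K`: archimedean (infinite) places together with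
finite places, identified with nonzero prime ideals of the ring of integers. -/
abbrev PlaceOf (K : Type*) [Field K] [NumberField K] :=
  InfinitePlace K ⊕ HeightOneSpectrum (𝓞 K)

/-- The `P`-adic order of `α ∈ K` (junk value `0` for `α = 0`). -/
noncomputable def ordAt {K : Type*} [Field K] [NumberField K]
    (P : HeightOneSpectrum (𝓞 K)) (α : K) : ℤ :=
  if h : P.valuation K α = 0 then 0 else -Multiplicative.toAdd (WithZero.unzero h)

/-- The normalized local absolute value `‖α‖_v = |α|_v^{ℓ_v}` at a place `v`, so that
`log⁺` of it is `ℓ_v · log⁺|α|_v`.  At a finite place `P` it is `N(P)^{-ord_P α}`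
(with junk value `1` at `α = 0`). -/
noncomputable def localNorm {K : Type*} [Field K] [NumberField K] :
    PlaceOf K → K → ℝ
  | .inl w => fun α => (w α) ^ w.mult
  | .inr P => fun α => (Ideal.absNorm P.asIdeal : ℝ) ^ (-(ordAt P α))

/-- The partial (T-)height `h_T(α) = Σ_{v ∈ T} (ℓ_v/d) log⁺ |α|_v`. -/
noncomputable def heightOn (K : Type*) [Field K] [NumberField K]
    (T : Set (PlaceOf K)) (α : K) : ℝ :=
  (Module.finrank ℚ K : ℝ)⁻¹ * ∑ᶠ v ∈ T, Real.log (max 1 (localNorm v α))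

/-- The absolute logarithmic Weil height of `α ∈ K`. -/
noncomputable def height (K : Type*) [Field K] [NumberField K] (α : K) : ℝ :=
  heightOn K Set.univ α

section Helpers
variable {K : Type*} [Field K] [NumberField K]

lemma unit_valuation_eq_one (P : HeightOneSpectrum (𝓞 K)) (u : (𝓞 K)ˣ) :
    P.valuation K ((u : 𝓞 K) : K) = 1 := by
  have h1 : P.valuation K ((u : 𝓞 K) : K) ≤ 1 := P.valuation_le_one (u : 𝓞 K)
  have h2 : P.valuation K (((u⁻¹ : (𝓞 K)ˣ) : 𝓞 K) : K) ≤ 1 := P.valuation_le_one _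
  have hm : P.valuation K ((u : 𝓞 K) : K) * P.valuation K (((u⁻¹ : (𝓞 K)ˣ) : 𝓞 K) : K) = 1 := by
    rw [← map_mul]
    norm_cast
    simp
  refine le_antisymm h1 ?_
  calc (1 : WithZero (Multiplicative ℤ)) = _ := hm.symm
    _ ≤ P.valuation K ((u : 𝓞 K) : K) * 1 := mul_le_mul_right h2 _
    _ = _ := mul_one _

lemma ordAt_unit (P : HeightOneSpectrum (𝓞 K)) (u : (𝓞 K)ˣ) :
    ordAt P ((u : 𝓞 K) : K) = 0 := by
  have hv := unit_valuation_eq_one P u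
  have h : P.valuation K ((u : 𝓞 K) : K) ≠ 0 := by rw [hv]; exact one_ne_zero
  rw [ordAt, dif_neg h]
  have h1 : WithZero.unzero h = 1 := by
    have h2 : ((WithZero.unzero h : Multiplicative ℤ) : WithZero (Multiplicative ℤ))
        = ((1 : Multiplicative ℤ) : WithZero (Multiplicative ℤ)) := by
      rw [WithZero.coe_unzero, hv, WithZero.coe_one]
    exact WithZero.coe_inj.mp h2
  rw [h1]
  simp

lemma localNorm_inr_unit (P : HeightOneSpectrum (𝓞 K)) (u : (𝓞 K)ˣ) :
    localNorm (.inr P) ((u : 𝓞 K) : K) = 1 := by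
  show (Ideal.absNorm P.asIdeal : ℝ) ^ (-(ordAt P ((u : 𝓞 K) : K))) = 1
  rw [ordAt_unit]
  simp

lemma log_max_one_pow {t : ℝ} (ht : 0 ≤ t) (m : ℕ) :
    Real.log (max 1 (t ^ m)) = m * Real.log (max 1 t) := by
  rcases Nat.eq_zero_or_pos m with hm | hm
  · simp [hm]
  rcases le_or_gt 1 t with h | h
  · rw [max_eq_right (one_le_pow₀ h), max_eq_right h, Real.log_pow]
  · rw [max_eq_left (pow_le_one₀ ht h.le), max_eq_left h.le, Real.log_one, mul_zero]

lemma height_unit_eq (u : (𝓞 K)ˣ) :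
    height K ((u : 𝓞 K) : K) = (Module.finrank ℚ K : ℝ)⁻¹ *
      ∑ w : InfinitePlace K, (InfinitePlace.mult w : ℝ) *
        Real.log (max 1 (w ((u : 𝓞 K) : K))) := by
  classical
  rw [height, heightOn, finsum_mem_univ]
  congr 1
  have hsupp : Function.support
      (fun v : PlaceOf K => Real.log (max 1 (localNorm v ((u : 𝓞 K) : K)))) ⊆
      ((Finset.univ.image (Sum.inl : InfinitePlace K → PlaceOf K)) : Finset (PlaceOf K)) := by
    intro v hv
    rcases v with w | P
    · simp
    · refine absurd ?_ hv
      show Real.log (max 1 (localNorm (Sum.inr P) ((u : 𝓞 K) : K))) = 0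
      rw [localNorm_inr_unit]
      simp
  rw [finsum_eq_finset_sum_of_support_subset _ hsupp,
    Finset.sum_image (fun x _ y _ h => Sum.inl.inj h)]
  refine Finset.sum_congr rfl fun w _ => ?_
  show Real.log (max 1 ((w ((u : 𝓞 K) : K)) ^ w.mult)) = _
  rw [log_max_one_pow (apply_nonneg _ _)]


open NumberField.Units NumberField.InfinitePlace in
lemma sum_mult_log_unit (u : (𝓞 K)ˣ) :
    ∑ w : InfinitePlace K, (mult w : ℝ) * Real.log (w ((u : 𝓞 K) : K)) = 0 := by
  have h := congr_arg Real.log (prod_eq_abs_norm ((u : 𝓞 K) : K))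
  rw [Units.norm, Rat.cast_one, Real.log_one] at h
  rw [Real.log_prod] at h
  · simpa [Real.log_pow] using h
  · exact fun w _ => pow_ne_zero _ ((map_ne_zero w).mpr (coe_ne_zero u))

open NumberField.Units NumberField.InfinitePlace in
lemma abs_mult_log_unit_le (u : (𝓞 K)ˣ) (w : InfinitePlace K) :
    |(mult w : ℝ) * Real.log (w ((u : 𝓞 K) : K))|
      ≤ (Module.finrank ℚ K : ℝ) * height K ((u : 𝓞 K) : K) := by
  set f : InfinitePlace K → ℝ := fun w => (mult w : ℝ) * Real.log (w ((u : 𝓞 K) : K)) with hf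
  set g : InfinitePlace K → ℝ := fun w => (mult w : ℝ) * Real.log (max 1 (w ((u : 𝓞 K) : K)))
    with hg
  have hg0 : ∀ w, 0 ≤ g w := fun w => mul_nonneg (Nat.cast_nonneg _)
    (Real.log_nonneg (le_max_left _ _))
  have hfg : ∀ w, f w ≤ g w := fun w => mul_le_mul_of_nonneg_left
    (Real.log_le_log (NumberField.InfinitePlace.pos_iff.mpr (coe_ne_zero u))
      (le_max_right _ _)) (Nat.cast_nonneg _)
  classical
  have hsum : ∑ w', f w' = 0 := sum_mult_log_unit u
  have hheight : (Module.finrank ℚ K : ℝ) * height K ((u : 𝓞 K) : K) = ∑ w', g w' := by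
    rw [height_unit_eq, ← mul_assoc, mul_inv_cancel₀ (by
      exact_mod_cast Module.finrank_pos.ne' ), one_mul]
  rw [hheight, abs_le]
  constructor
  · have h0 : f w + ∑ w' ∈ Finset.univ.erase w, f w' = 0 := by
      rw [Finset.add_sum_erase Finset.univ f (Finset.mem_univ w)]; exact hsum
    have hfe : -f w = ∑ w' ∈ Finset.univ.erase w, f w' := by linarith
    rw [neg_le, hfe]
    calc ∑ w' ∈ Finset.univ.erase w, f w' ≤ ∑ w' ∈ Finset.univ.erase w, g w' :=
          Finset.sum_le_sum fun i _ => hfg i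
      _ ≤ ∑ w', g w' := Finset.sum_le_sum_of_subset_of_nonneg
          (Finset.erase_subset _ _) (fun i _ _ => hg0 i)
  · calc f w ≤ g w := hfg w
      _ ≤ ∑ w', g w' := Finset.single_le_sum (fun i _ => hg0 i) (Finset.mem_univ w)


open NumberField.Units NumberField.Units.dirichletUnitTheorem in
lemma span_logEmbedding_eq_top {r : ℕ} (ε : Fin r → (𝓞 K)ˣ)
    (hfund : ∀ u : (𝓞 K)ˣ, ∃ (ζ : (𝓞 K)ˣ) (k : Fin r → ℤ),
      IsOfFinOrder ζ ∧ u = ζ * ∏ i, ε i ^ k i) :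
    Submodule.span ℝ (Set.range fun i => logEmbedding K (Additive.ofMul (ε i))) = ⊤ := by
  rw [eq_top_iff, ← unitLattice_span_eq_top (K := K), Submodule.span_le]
  intro x hx
  rw [SetLike.mem_coe, unitLattice, Submodule.mem_map] at hx
  obtain ⟨u, -, rfl⟩ := hx
  obtain ⟨ζ, k, hζ, hu⟩ := hfund (Additive.toMul u)
  have hlog : (logEmbedding K).toIntLinearMap u =
      ∑ i, k i • logEmbedding K (Additive.ofMul (ε i)) := by
    show logEmbedding K u = _
    have : u = Additive.ofMul (ζ * ∏ i, ε i ^ k i) := by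
      rw [← hu]; rfl
    rw [this, ofMul_mul, map_add, ofMul_prod, map_sum]
    have hζ0 : logEmbedding K (Additive.ofMul ζ) = 0 :=
      logEmbedding_eq_zero_iff.mpr (by
        rw [torsion]; exact CommGroup.mem_torsion _ |>.mpr hζ)
    rw [hζ0, zero_add]
    refine Finset.sum_congr rfl fun i _ => ?_
    rw [ofMul_zpow, map_zsmul]
  rw [hlog]
  exact Submodule.sum_mem _ fun i _ =>
    zsmul_mem (Submodule.subset_span (Set.mem_range_self i)) (k i)

/-- The coercion `(𝓞 K)ˣ →* Kˣ`. -/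
noncomputable def unitsToField : (𝓞 K)ˣ →* Kˣ :=
  Units.map (algebraMap (𝓞 K) K : (𝓞 K) →* K)

lemma unitsToField_apply (u : (𝓞 K)ˣ) : ((unitsToField u : Kˣ) : K) = ((u : 𝓞 K) : K) := rfl

lemma log_v_zpow (v : InfinitePlace K) (u : (𝓞 K)ˣ) (k : ℤ) :
    Real.log (v (((u ^ k : (𝓞 K)ˣ) : 𝓞 K) : K)) = (k : ℝ) * Real.log (v ((u : 𝓞 K) : K)) := by
  rw [← unitsToField_apply, map_zpow, Units.val_zpow_eq_zpow_val, map_zpow₀, Real.log_zpow,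
    unitsToField_apply]

lemma log_v_prod {m : ℕ} (v : InfinitePlace K) (f : Fin m → (𝓞 K)ˣ) :
    Real.log (v (((∏ i, f i : (𝓞 K)ˣ) : 𝓞 K) : K)) =
      ∑ i, Real.log (v (((f i : 𝓞 K) : K))) := by
  rw [← unitsToField_apply, map_prod]
  have : ((∏ i, unitsToField (f i) : Kˣ) : K) = ∏ i, ((unitsToField (f i) : Kˣ) : K) := by
    exact_mod_cast rfl
  rw [this]
  rw [map_prod, Real.log_prod]
  · simp_rw [unitsToField_apply]
  · intro i _
    simp only [unitsToField_apply]
    exact (map_ne_zero v).mpr (NumberField.Units.coe_ne_zero (f i))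

end Helpers

open NumberField.Units NumberField.Units.dirichletUnitTheorem NumberField.InfinitePlace

/-- Approximation of the norm by units: if `K` has `r+1` archimedean places, unit rank
`r ≥ 1`, regulator `R`, and a fundamental system of units `ε₁, …, ε_r` of height at most
`A·R`, then for every nonzero `α ∈ 𝓞 K` and `n ≥ 1` there is a unit `ε` with
`|log|ε^n α|_v - (1/d) log N(α)| ≤ (1/2)·A·n·d²·R` at every archimedean place `v`. -/
theorem exists_unit_approx
    (K : Type*) [Field K] [NumberField K]
    (r : ℕ) (hr : Nat.card (InfinitePlace K) = r + 1) (hr1 : 1 ≤ r)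
    (ε : Fin r → (𝓞 K)ˣ)
    (hfund : ∀ u : (𝓞 K)ˣ, ∃ (ζ : (𝓞 K)ˣ) (k : Fin r → ℤ),
      IsOfFinOrder ζ ∧ u = ζ * ∏ i, ε i ^ k i)
    (A : ℝ)
    (hA : ∀ i, height K ((ε i : 𝓞 K) : K) ≤ A * Units.regulator K)
    (α : 𝓞 K) (hα : α ≠ 0) (n : ℕ) (hn : 1 ≤ n) :
    ∃ e : (𝓞 K)ˣ, ∀ v : InfinitePlace K,
      |Real.log (v (((e : 𝓞 K) : K) ^ n * (α : K)))
          - (Module.finrank ℚ K : ℝ)⁻¹ * Real.log (Ideal.absNorm (Ideal.span {α}))|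
        ≤ (1 / 2) * A * n * (Module.finrank ℚ K : ℝ) ^ 2 * Units.regulator K := by
  classical
  have hd : (0 : ℝ) < (Module.finrank ℚ K : ℝ) := by exact_mod_cast Module.finrank_pos
  set d : ℝ := (Module.finrank ℚ K : ℝ) with hd_def
  set R : ℝ := Units.regulator K with hR_def
  set NL : ℝ := Real.log ((Ideal.absNorm (Ideal.span {α}) : ℝ)) with hNL_def
  have hα' : ((α : 𝓞 K) : K) ≠ 0 := fun h => hα (by exact_mod_cast h)
  -- product formula for α
  have hprod : ∑ w : InfinitePlace K, (mult w : ℝ) * Real.log (w ((α : 𝓞 K) : K)) = NL := by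
    have h := congr_arg Real.log (prod_eq_abs_norm ((α : 𝓞 K) : K))
    rw [Real.log_prod (fun w _ => pow_ne_zero _ ((map_ne_zero w).mpr hα'))] at h
    simp_rw [Real.log_pow] at h
    have habs : ((Ideal.absNorm (Ideal.span {α}) : ℕ) : ℚ)
        = |Algebra.norm ℚ ((α : 𝓞 K) : K)| := by
      rw [Ideal.absNorm_span_singleton, Nat.cast_natAbs, Int.cast_abs, Algebra.coe_norm_int]
    rw [h, hNL_def, ← habs]
    norm_cast
  -- the trace-zero vector x
  have hsum_mult : ∑ w : InfinitePlace K, (mult w : ℝ) = d := by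
    rw [hd_def]; exact_mod_cast sum_mult_eq (K := K)
  set x : InfinitePlace K → ℝ := fun w =>
    (mult w : ℝ) * Real.log (w ((α : 𝓞 K) : K)) - (mult w : ℝ) * (d⁻¹ * NL) with hx_def
  have hxsum : ∑ w, x w = 0 := by
    rw [hx_def]
    rw [Finset.sum_sub_distrib, hprod, ← Finset.sum_mul, hsum_mult, ← mul_assoc,
      mul_inv_cancel₀ hd.ne', one_mul, sub_self]
  -- coefficients t from the span
  have hspan := span_logEmbedding_eq_top ε hfund
  have hy : (fun w : {w : InfinitePlace K // w ≠ w₀} => x w.val) ∈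
      Submodule.span ℝ (Set.range fun i => logEmbedding K (Additive.ofMul (ε i))) := by
    rw [hspan]; exact Submodule.mem_top
  obtain ⟨t, ht⟩ := (Submodule.mem_span_range_iff_exists_fun ℝ).mp hy
  set c : Fin r → InfinitePlace K → ℝ := fun i w =>
    (mult w : ℝ) * Real.log (w ((ε i : 𝓞 K) : K)) with hc_def
  have htw : ∀ w : InfinitePlace K, w ≠ w₀ → ∑ i, t i * c i w = x w := by
    intro w hw
    have h := congrFun ht ⟨w, hw⟩
    simpa [Finset.sum_apply, Pi.smul_apply, smul_eq_mul, logEmbedding_component, hc_def] using h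
  have hcsum : ∀ i, ∑ w, c i w = 0 := fun i => sum_mult_log_unit (ε i)
  have hX : ∀ w, x w = ∑ i, t i * c i w := by
    intro w
    by_cases hw : w = w₀
    · subst hw
      have hsumF : ∑ w', (x w' - ∑ i, t i * c i w') = 0 := by
        rw [Finset.sum_sub_distrib, hxsum, zero_sub, neg_eq_zero, Finset.sum_comm]
        refine Finset.sum_eq_zero fun i _ => ?_
        rw [← Finset.mul_sum, hcsum i, mul_zero]
      have hadd := Finset.add_sum_erase Finset.univ
        (fun w' => x w' - ∑ i, t i * c i w') (Finset.mem_univ w₀)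
      have herase : ∑ w' ∈ Finset.univ.erase w₀, (x w' - ∑ i, t i * c i w') = 0 :=
        Finset.sum_eq_zero fun w' hw' => by
          rw [htw w' (Finset.ne_of_mem_erase hw')]; exact sub_self _
      have hterm := hadd.trans hsumF
      rw [herase, add_zero] at hterm
      have h0 : x w₀ - ∑ i, t i * c i w₀ = 0 := by simpa using hterm
      linarith
    · rw [htw w hw]
  -- choice of exponents
  set k : Fin r → ℤ := fun i => round (-(t i) / (n : ℝ)) with hk_def
  refine ⟨∏ i, ε i ^ k i, fun v => ?_⟩
  set e : (𝓞 K)ˣ := ∏ i, ε i ^ k i with he_def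
  have hev : Real.log (v ((e : 𝓞 K) : K)) =
      ∑ i, (k i : ℝ) * Real.log (v ((ε i : 𝓞 K) : K)) := by
    rw [he_def, log_v_prod]
    exact Finset.sum_congr rfl fun i _ => log_v_zpow v (ε i) (k i)
  have hsplit : Real.log (v (((e : 𝓞 K) : K) ^ n * ((α : 𝓞 K) : K))) =
      (n : ℝ) * Real.log (v ((e : 𝓞 K) : K)) + Real.log (v ((α : 𝓞 K) : K)) := by
    rw [map_mul, map_pow, Real.log_mul (pow_ne_zero _ ((map_ne_zero v).mpr (coe_ne_zero e)))
      ((map_ne_zero v).mpr hα'), Real.log_pow]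
  -- the key identity
  have hkey : (mult v : ℝ) * (Real.log (v (((e : 𝓞 K) : K) ^ n * ((α : 𝓞 K) : K))) - d⁻¹ * NL)
      = ∑ i, (t i + (n : ℝ) * (k i : ℝ)) * c i v := by
    have h1 : ∑ i, (t i + (n : ℝ) * (k i : ℝ)) * c i v
        = (∑ i, t i * c i v) + (n : ℝ) * ∑ i, (k i : ℝ) * c i v := by
      rw [Finset.mul_sum, ← Finset.sum_add_distrib]
      exact Finset.sum_congr rfl fun i _ => by ring
    have h2 : ∑ i, (k i : ℝ) * c i v
        = (mult v : ℝ) * ∑ i, (k i : ℝ) * Real.log (v ((ε i : 𝓞 K) : K)) := by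
      rw [Finset.mul_sum]
      exact Finset.sum_congr rfl fun i _ => by rw [hc_def]; ring
    rw [h1, ← hX v, h2, hsplit, ← hev, hx_def]
    ring
  -- estimates
  have hAR : 0 ≤ A * R := by
    have h0 : 0 ≤ height K ((ε ⟨0, hr1⟩ : 𝓞 K) : K) := by
      rw [height_unit_eq]
      refine mul_nonneg (by positivity) (Finset.sum_nonneg fun w _ =>
        mul_nonneg (Nat.cast_nonneg _) (Real.log_nonneg (le_max_left _ _)))
    exact le_trans h0 (hA ⟨0, hr1⟩)
  have hcb : ∀ i, |c i v| ≤ d * (A * R) := fun i =>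
    le_trans (abs_mult_log_unit_le (ε i) v) (mul_le_mul_of_nonneg_left (hA i) hd.le)
  have hn0 : (0 : ℝ) < (n : ℝ) := by exact_mod_cast hn
  have htk : ∀ i, |t i + (n : ℝ) * (k i : ℝ)| ≤ (n : ℝ) / 2 := by
    intro i
    have h := abs_sub_round (-(t i) / (n : ℝ))
    have heq : t i + (n : ℝ) * (k i : ℝ)
        = -((n : ℝ) * ((-(t i) / (n : ℝ)) - (k i : ℝ))) := by
      field_simp
      ring
    rw [heq, abs_neg, abs_mul, abs_of_pos hn0]
    calc (n : ℝ) * |(-(t i) / (n : ℝ)) - (k i : ℝ)| ≤ (n : ℝ) * (1 / 2) :=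
          mul_le_mul_of_nonneg_left h hn0.le
      _ = (n : ℝ) / 2 := by ring
  have hbound : |∑ i, (t i + (n : ℝ) * (k i : ℝ)) * c i v|
      ≤ (r : ℝ) * (((n : ℝ) / 2) * (d * (A * R))) := by
    calc |∑ i, (t i + (n : ℝ) * (k i : ℝ)) * c i v|
        ≤ ∑ i, |(t i + (n : ℝ) * (k i : ℝ)) * c i v| := Finset.abs_sum_le_sum_abs _ _
      _ ≤ ∑ _i : Fin r, ((n : ℝ) / 2) * (d * (A * R)) := Finset.sum_le_sum fun i _ => by
          rw [abs_mul]
          exact mul_le_mul (htk i) (hcb i) (abs_nonneg _) (by positivity)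
      _ = (r : ℝ) * (((n : ℝ) / 2) * (d * (A * R))) := by
          rw [Finset.sum_const, Finset.card_univ, Fintype.card_fin, nsmul_eq_mul]
  have hrd : (r : ℝ) ≤ d := by
    have hcard : Fintype.card (InfinitePlace K) ≤ Module.finrank ℚ K := by
      rw [← sum_mult_eq (K := K), Fintype.card, Finset.card_eq_sum_ones]
      exact Finset.sum_le_sum fun w _ => mult_pos
    have h1 : r + 1 ≤ Module.finrank ℚ K := by
      rw [← hr, Nat.card_eq_fintype_card]; exact hcard
    have : (r : ℝ) + 1 ≤ d := by rw [hd_def]; exact_mod_cast h1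
    linarith
  have hmv : (1 : ℝ) ≤ (mult v : ℝ) := one_le_mult
  have habs1 : |Real.log (v (((e : 𝓞 K) : K) ^ n * ((α : 𝓞 K) : K))) - d⁻¹ * NL|
      ≤ |(mult v : ℝ) * (Real.log (v (((e : 𝓞 K) : K) ^ n * ((α : 𝓞 K) : K))) - d⁻¹ * NL)| := by
    rw [abs_mul]
    nth_rw 1 [← one_mul
      |Real.log (v (((e : 𝓞 K) : K) ^ n * ((α : 𝓞 K) : K))) - d⁻¹ * NL|]
    exact mul_le_mul_of_nonneg_right (le_trans hmv (le_abs_self _)) (abs_nonneg _)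
  calc |Real.log (v (((e : 𝓞 K) : K) ^ n * ((α : 𝓞 K) : K))) - d⁻¹ * NL|
      ≤ |(mult v : ℝ) * (Real.log (v (((e : 𝓞 K) : K) ^ n * ((α : 𝓞 K) : K))) - d⁻¹ * NL)| :=
        habs1
    _ = |∑ i, (t i + (n : ℝ) * (k i : ℝ)) * c i v| := by rw [hkey]
    _ ≤ (r : ℝ) * (((n : ℝ) / 2) * (d * (A * R))) := hbound
    _ ≤ d * (((n : ℝ) / 2) * (d * (A * R))) :=
        mul_le_mul_of_nonneg_right hrd (by positivity)
    _ = (1 / 2) * A * (n : ℝ) * d ^ 2 * R := by ring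
end

section
/- Let K be a number field, f ∈ O_K[X] with 0 not periodic, α ∈ O_K, m > k ≥ 1 integers, and suppose h_{S_k}(f^(m)(α)^{-1}) < h(f^(m)(α)), where S_k consists of the archimedean places together with the finite places of primes dividing one of f^(1)(0), …, f^(k)(0). Then there exists a prime ideal p of O_K dividing f^(m)(α) that divides none of f^(m-k)(α), f^(m-k+1)(α), …, f^(m-1)(α). -/
open NumberField IsDedekindDomain

section Helpers

variable {K : Type*} [Field K] [NumberField K]

open scoped Classical in
/-- Multiplicity of `P` in the factorization of `(β)`. -/
noncomputable def nOrd (P : HeightOneSpectrum (𝓞 K)) (β : 𝓞 K) : ℕ :=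
  (Associates.mk P.asIdeal).count (Associates.mk (Ideal.span {β})).factors

lemma ordAt_coe (P : HeightOneSpectrum (𝓞 K)) {β : 𝓞 K} (hβ : β ≠ 0) :
    ordAt P (β : K) = (nOrd P β : ℤ) := by
  have hval : P.valuation K (β : K) = P.intValuationDef β := by
    rw [show ((β : K)) = algebraMap (𝓞 K) K β from rfl, P.valuation_of_algebraMap,
      P.intValuation_apply]
  have h2 : P.intValuationDef β = Multiplicative.ofAdd (-(nOrd P β : ℤ)) :=
    P.intValuationDef_if_neg hβ
  rw [ordAt]
  split_ifs with h
  · rw [hval, h2] at h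
    exact absurd h WithZero.coe_ne_zero
  · have hu : WithZero.unzero h = Multiplicative.ofAdd (-(nOrd P β : ℤ)) := by
      rw [← WithZero.coe_inj, WithZero.coe_unzero, hval, h2]
    rw [hu]
    simp

lemma ordAt_inv (P : HeightOneSpectrum (𝓞 K)) (γ : K) : ordAt P γ⁻¹ = -ordAt P γ := by
  rcases eq_or_ne γ 0 with rfl | hγ
  · simp [ordAt]
  · have h : P.valuation K γ ≠ 0 := (Valuation.ne_zero_iff _).2 hγ
    have h' : P.valuation K γ⁻¹ ≠ 0 := (Valuation.ne_zero_iff _).2 (inv_ne_zero hγ)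
    rw [ordAt, ordAt, dif_neg h, dif_neg h']
    have hu : WithZero.unzero h' = (WithZero.unzero h)⁻¹ := by
      rw [← WithZero.coe_inj, WithZero.coe_unzero, WithZero.coe_inv, WithZero.coe_unzero,
        map_inv₀]
    rw [hu]
    simp

lemma one_lt_absNormR (P : HeightOneSpectrum (𝓞 K)) : 1 < (Ideal.absNorm P.asIdeal : ℝ) := by
  have h0 : Ideal.absNorm P.asIdeal ≠ 0 := by
    rw [Ne, Ideal.absNorm_eq_zero_iff]; exact P.ne_bot
  have h1 : Ideal.absNorm P.asIdeal ≠ 1 := by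
    rw [Ne, Ideal.absNorm_eq_one_iff]; exact P.isPrime.ne_top
  have : 1 < Ideal.absNorm P.asIdeal := by omega
  exact_mod_cast this

lemma nOrd_eq_zero_iff {β : 𝓞 K} (hβ : β ≠ 0) (P : HeightOneSpectrum (𝓞 K)) :
    nOrd P β = 0 ↔ β ∉ P.asIdeal := by
  have hspan : (Ideal.span {β} : Ideal (𝓞 K)) ≠ 0 := by
    rwa [Ne, Ideal.zero_eq_bot, Ideal.span_singleton_eq_bot]
  classical
  rw [← not_iff_not, not_not, ← Ne, nOrd,
    Associates.count_ne_zero_iff_dvd hspan (by apply P.irreducible),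
    Ideal.dvd_span_singleton]

lemma log_localNorm_inr_int (P : HeightOneSpectrum (𝓞 K)) (β : 𝓞 K) :
    Real.log (max 1 (localNorm (Sum.inr P) (β : K))) = 0 := by
  have hLN : ∀ γ : K, localNorm (Sum.inr P) γ
      = (Ideal.absNorm P.asIdeal : ℝ) ^ (-(ordAt P γ)) := fun _ => rfl
  rcases eq_or_ne β 0 with rfl | hβ
  · rw [show ((0 : 𝓞 K) : K) = (0 : K) by norm_cast, hLN,
      show ordAt P (0 : K) = 0 by simp [ordAt]]
    norm_num
  · rw [hLN, ordAt_coe P hβ]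
    have h1 : ((Ideal.absNorm P.asIdeal : ℝ)) ^ (-(nOrd P β : ℤ)) ≤ 1 :=
      zpow_le_one_of_nonpos₀ (le_of_lt (one_lt_absNormR P)) (by omega)
    rw [max_eq_left h1, Real.log_one]

lemma log_localNorm_inr_inv (P : HeightOneSpectrum (𝓞 K)) {β : 𝓞 K} (hβ : β ≠ 0) :
    Real.log (max 1 (localNorm (Sum.inr P) (((β : K))⁻¹))) =
      (nOrd P β : ℝ) * Real.log (Ideal.absNorm P.asIdeal : ℝ) := by
  have hLN : ∀ γ : K, localNorm (Sum.inr P) γ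
      = (Ideal.absNorm P.asIdeal : ℝ) ^ (-(ordAt P γ)) := fun _ => rfl
  rw [hLN, ordAt_inv, ordAt_coe P hβ, neg_neg, zpow_natCast]
  have h1 : (1 : ℝ) ≤ (Ideal.absNorm P.asIdeal : ℝ) ^ (nOrd P β) :=
    one_le_pow₀ (le_of_lt (one_lt_absNormR P))
  rw [max_eq_right h1, Real.log_pow]

end Helpers

section Helpers2

variable {K : Type*} [Field K] [NumberField K]

open scoped Classical in
lemma nOrd_support_finite {β : 𝓞 K} (hβ : β ≠ 0) :
    {P : HeightOneSpectrum (𝓞 K) | nOrd P β ≠ 0}.Finite := by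
  have hspan : (Ideal.span {β} : Ideal (𝓞 K)) ≠ 0 := by
    rwa [Ne, Ideal.zero_eq_bot, Ideal.span_singleton_eq_bot]
  refine (Ideal.finite_factors hspan).subset ?_
  intro P hP
  exact (Associates.count_ne_zero_iff_dvd hspan (by apply P.irreducible)).mp hP

open scoped Classical in
lemma finsum_nOrd_log {β : 𝓞 K} (hβ : β ≠ 0) :
    ∑ᶠ P : HeightOneSpectrum (𝓞 K), (nOrd P β : ℝ) * Real.log (Ideal.absNorm P.asIdeal : ℝ)
      = Real.log (Ideal.absNorm (Ideal.span {β} : Ideal (𝓞 K)) : ℝ) := by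
  have hspan : (Ideal.span {β} : Ideal (𝓞 K)) ≠ 0 := by
    rwa [Ne, Ideal.zero_eq_bot, Ideal.span_singleton_eq_bot]
  have hfin : (Function.mulSupport _).Finite := Ideal.finite_mulSupport hspan
  set T : Finset (HeightOneSpectrum (𝓞 K)) := hfin.toFinset with hT
  have hsubT : ∀ P : HeightOneSpectrum (𝓞 K), nOrd P β ≠ 0 → P ∈ T := by
    intro P hP
    rw [hT, Set.Finite.mem_toFinset, Function.mem_mulSupport,
      HeightOneSpectrum.maxPowDividing]
    intro hcon
    have h1 : (P.asIdeal : Ideal (𝓞 K)) ^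
        (Associates.mk P.asIdeal).count (Associates.mk (Ideal.span {β})).factors ≤ P.asIdeal :=
      Ideal.pow_le_self hP
    rw [hcon] at h1
    exact P.isPrime.ne_top (top_le_iff.mp (by simpa [Ideal.one_eq_top] using h1))
  -- absNorm identity over T
  have hfact := Ideal.finprod_heightOneSpectrum_factorization hspan
  have hprodT : ∏ P ∈ T, P.maxPowDividing (Ideal.span {β}) = Ideal.span {β} := by
    conv_rhs => rw [← hfact]
    exact (finprod_eq_prod_of_mulSupport_subset _ (by intro x hx; exact Finset.mem_coe.mpr ((Set.Finite.mem_toFinset hfin).2 hx))).symm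
  have hnormN : Ideal.absNorm (Ideal.span {β} : Ideal (𝓞 K))
      = ∏ P ∈ T, (Ideal.absNorm P.asIdeal) ^ (nOrd P β) := by
    rw [← hprodT, map_prod]
    refine Finset.prod_congr rfl fun P _ => ?_
    rw [HeightOneSpectrum.maxPowDividing, map_pow]
    rfl
  have hnormR : (Ideal.absNorm (Ideal.span {β} : Ideal (𝓞 K)) : ℝ)
      = ∏ P ∈ T, (Ideal.absNorm P.asIdeal : ℝ) ^ (nOrd P β) := by
    rw [hnormN]; push_cast; rfl
  have hlog : Real.log (Ideal.absNorm (Ideal.span {β} : Ideal (𝓞 K)) : ℝ)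
      = ∑ P ∈ T, (nOrd P β : ℝ) * Real.log (Ideal.absNorm P.asIdeal : ℝ) := by
    rw [hnormR, Real.log_prod]
    · exact Finset.sum_congr rfl fun P _ => Real.log_pow _ _
    · intro P _
      exact pow_ne_zero _ (ne_of_gt (lt_trans one_pos (one_lt_absNormR P)))
  rw [hlog]
  exact finsum_eq_finset_sum_of_support_subset _ (by
    intro P hP
    simp only [Function.mem_support] at hP
    have : nOrd P β ≠ 0 := by
      intro h0; rw [h0] at hP; simpa using hP
    exact hsubT P this)

lemma arch_log_prod {β : 𝓞 K} (hβ : β ≠ 0) :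
    ∑ w : InfinitePlace K, Real.log ((w (β : K)) ^ w.mult)
      = Real.log (Ideal.absNorm (Ideal.span {β} : Ideal (𝓞 K)) : ℝ) := by
  have hne : ∀ w : InfinitePlace K, w (β : K) ^ w.mult ≠ 0 := fun w =>
    pow_ne_zero _ (ne_of_gt (InfinitePlace.pos_iff.mpr (by
      simpa using (RingOfIntegers.coe_ne_zero_iff (K := K)).mpr hβ)))
  rw [← Real.log_prod (fun w _ => hne w), InfinitePlace.prod_eq_abs_norm]
  congr 1
  rw [Ideal.absNorm_span_singleton, ← Algebra.coe_norm_int]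
  push_cast [Nat.cast_natAbs]
  norm_num

end Helpers2

section Helpers3

variable {K : Type*} [Field K] [NumberField K]

lemma finsum_place_split (g : PlaceOf K → ℝ)
    (hfin : (Function.support fun P : HeightOneSpectrum (𝓞 K) => g (Sum.inr P)).Finite) :
    ∑ᶠ v : PlaceOf K, g v
      = (∑ w : InfinitePlace K, g (Sum.inl w)) + ∑ᶠ P, g (Sum.inr P) := by
  rw [← finsum_mem_univ, ← Set.range_inl_union_range_inr]
  have hd : Disjoint (Set.range (Sum.inl : InfinitePlace K → PlaceOf K)) (Set.range Sum.inr) :=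
    Set.isCompl_range_inl_range_inr.disjoint
  have hs : ((Set.range (Sum.inl : InfinitePlace K → PlaceOf K)) ∩ Function.support g).Finite :=
    (Set.finite_range _).inter_of_left _
  have ht : ((Set.range (Sum.inr : HeightOneSpectrum (𝓞 K) → PlaceOf K))
      ∩ Function.support g).Finite := by
    refine (hfin.image Sum.inr).subset ?_
    rintro x ⟨⟨P, rfl⟩, hx⟩
    exact ⟨P, hx, rfl⟩
  rw [finsum_mem_union' hd hs ht, finsum_mem_range Sum.inl_injective,
    finsum_mem_range Sum.inr_injective, finsum_eq_sum_of_fintype]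

lemma heightOn_zero (T : Set (PlaceOf K)) : heightOn K T (0 : K) = 0 := by
  rw [heightOn]
  have h : ∀ v ∈ T, Real.log (max 1 (localNorm v (0 : K))) = 0 := by
    rintro (w | P) _
    · show Real.log (max 1 ((w (0 : K)) ^ w.mult)) = 0
      rw [map_zero, zero_pow InfinitePlace.mult_ne_zero]
      norm_num
    · show Real.log (max 1 ((Ideal.absNorm P.asIdeal : ℝ) ^ (-(ordAt P (0 : K))))) = 0
      rw [show ordAt P (0 : K) = 0 by simp [ordAt]]
      norm_num
  rw [finsum_mem_eq_zero_of_forall_eq_zero h, mul_zero]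

lemma log_max_inv {x : ℝ} (hx : 0 < x) :
    Real.log (max 1 x⁻¹) = Real.log (max 1 x) - Real.log x := by
  rcases le_total 1 x with h | h
  · have h1 : x⁻¹ ≤ 1 := by
      rw [inv_le_one_iff₀]; right; exact h
    rw [max_eq_left h1, max_eq_right h, Real.log_one]
    ring
  · have h1 : 1 ≤ x⁻¹ := by
      rw [one_le_inv_iff₀]; exact ⟨hx, h⟩
    rw [max_eq_right h1, max_eq_left h, Real.log_inv, Real.log_one, zero_sub]

/-- The key height identity: for a nonzero algebraic integer `β` and any set of places `T`
containing all archimedean places and all primes dividing `β`,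
`h_T(β⁻¹) = h(β)`. -/
lemma heightOn_inv_eq {β : 𝓞 K} (hβ : β ≠ 0) (T : Set (PlaceOf K))
    (hT1 : Set.range (Sum.inl : InfinitePlace K → PlaceOf K) ⊆ T)
    (hT2 : ∀ P : HeightOneSpectrum (𝓞 K), β ∈ P.asIdeal → Sum.inr P ∈ T) :
    heightOn K T (((β : K))⁻¹) = height K (β : K) := by
  classical
  have hcoe : ((β : K)) ≠ 0 := by
    simpa using hβ
  set A : ℝ := ∑ w : InfinitePlace K, Real.log (max 1 ((w (β : K)) ^ w.mult)) with hA
  set L : ℝ := Real.log (Ideal.absNorm (Ideal.span {β} : Ideal (𝓞 K)) : ℝ) with hL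
  -- the inverse side
  have harch_inv : ∀ w : InfinitePlace K,
      Real.log (max 1 (localNorm (Sum.inl w) (((β : K))⁻¹)))
        = Real.log (max 1 ((w (β : K)) ^ w.mult)) - Real.log ((w (β : K)) ^ w.mult) := by
    intro w
    have hpos : 0 < (w (β : K)) ^ w.mult := pow_pos (InfinitePlace.pos_iff.mpr hcoe) _
    have hln : localNorm (Sum.inl w) (((β : K))⁻¹) = ((w (β : K)) ^ w.mult)⁻¹ := by
      show (w ((β : K)⁻¹)) ^ w.mult = _
      rw [map_inv₀, inv_pow]
    rw [hln, log_max_inv hpos]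
  have hfin_inv : (Function.support fun P : HeightOneSpectrum (𝓞 K) =>
      Real.log (max 1 (localNorm (Sum.inr P) (((β : K))⁻¹)))).Finite := by
    refine (nOrd_support_finite hβ).subset ?_
    intro P hP
    rw [Function.mem_support, log_localNorm_inr_inv P hβ] at hP
    rw [Set.mem_setOf_eq]
    intro h0
    rw [h0] at hP
    simp at hP
  -- restrict the sum over T to the whole universe
  have hTuniv : ∑ᶠ v ∈ T, Real.log (max 1 (localNorm v (((β : K))⁻¹)))
      = ∑ᶠ v, Real.log (max 1 (localNorm v (((β : K))⁻¹))) := by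
    rw [← finsum_mem_univ fun v => Real.log (max 1 (localNorm v (((β : K))⁻¹)))]
    apply finsum_mem_inter_support_eq'
    rintro (w | P) hx
    · simp only [Set.mem_univ, iff_true]
      exact hT1 (Set.mem_range_self w)
    · simp only [Set.mem_univ, iff_true]
      rw [Function.mem_support, log_localNorm_inr_inv P hβ] at hx
      apply hT2
      by_contra hmem
      rw [← nOrd_eq_zero_iff hβ P] at hmem
      rw [hmem] at hx
      simp at hx
  have hfinsum_inv : ∑ᶠ P : HeightOneSpectrum (𝓞 K),
      Real.log (max 1 (localNorm (Sum.inr P) (((β : K))⁻¹))) = L := by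
    rw [hL, ← finsum_nOrd_log hβ]
    exact finsum_congr fun P => log_localNorm_inr_inv P hβ
  have harch_sum : ∑ w : InfinitePlace K,
      Real.log (max 1 (localNorm (Sum.inl w) (((β : K))⁻¹))) = A - L := by
    rw [hA, hL, ← arch_log_prod hβ]
    rw [← Finset.sum_sub_distrib]
    exact Finset.sum_congr rfl fun w _ => harch_inv w
  -- the height of β itself
  have hfin_int : (Function.support fun P : HeightOneSpectrum (𝓞 K) =>
      Real.log (max 1 (localNorm (Sum.inr P) ((β : K))))).Finite := by
    have : (Function.support fun P : HeightOneSpectrum (𝓞 K) =>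
        Real.log (max 1 (localNorm (Sum.inr P) ((β : K))))) = ∅ := by
      ext P
      simp [log_localNorm_inr_int]
    rw [this]
    exact Set.finite_empty
  have hheight : height K (β : K) = (Module.finrank ℚ K : ℝ)⁻¹ * A := by
    rw [height, heightOn, finsum_mem_univ, finsum_place_split _ hfin_int]
    have h0 : ∑ᶠ P : HeightOneSpectrum (𝓞 K),
        Real.log (max 1 (localNorm (Sum.inr P) ((β : K)))) = 0 := by
      rw [finsum_congr fun P => log_localNorm_inr_int P β]
      exact finsum_zero
    rw [h0, add_zero]
    rfl
  rw [heightOn, hTuniv, finsum_place_split _ hfin_inv, hfinsum_inv, harch_sum, hheight]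
  ring

lemma map_iterate_eval {R S : Type*} [CommRing R] [CommRing S] (φ : R →+* S)
    (f : Polynomial R) (n : ℕ) (x : R) :
    φ ((fun y => f.eval y)^[n] x) = (fun y => (f.map φ).eval y)^[n] (φ x) := by
  induction n with
  | zero => simp
  | succ n ih =>
      rw [Function.iterate_succ_apply', Function.iterate_succ_apply', ← ih,
        Polynomial.eval_map, Polynomial.eval₂_at_apply]

end Helpers3

/-- If `h_{S_k}(f^(m)(α)⁻¹) < h(f^(m)(α))`, where `S_k` consists of the archimedean places
together with the primes dividing one of `f^(1)(0), …, f^(k)(0)`, then some prime ideal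
divides `f^(m)(α)` but none of `f^(m-k)(α), …, f^(m-1)(α)`. -/
theorem exists_prime_dvd_iterate_not_dvd_previous
    (K : Type*) [Field K] [NumberField K]
    (f : Polynomial (𝓞 K))
    (hper : ∀ j : ℕ, 1 ≤ j → (fun x => f.eval x)^[j] (0 : 𝓞 K) ≠ 0)
    (α : 𝓞 K) (m k : ℕ) (hk : 1 ≤ k) (hkm : k < m)
    (hlt : heightOn K
        (Set.range (Sum.inl : InfinitePlace K → PlaceOf K) ∪
          Sum.inr '' {P : HeightOneSpectrum (𝓞 K) |
            ∃ j : ℕ, 1 ≤ j ∧ j ≤ k ∧ (fun x => f.eval x)^[j] (0 : 𝓞 K) ∈ P.asIdeal})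
        ((((fun x => f.eval x)^[m] α : 𝓞 K) : K)⁻¹)
      < height K (((fun x => f.eval x)^[m] α : 𝓞 K) : K)) :
    ∃ P : HeightOneSpectrum (𝓞 K),
      (fun x => f.eval x)^[m] α ∈ P.asIdeal ∧
      ∀ j : ℕ, m - k ≤ j → j < m → (fun x => f.eval x)^[j] α ∉ P.asIdeal := by
  set β : 𝓞 K := (fun x => f.eval x)^[m] α with hβdef
  have hβ : β ≠ 0 := by
    intro h0
    rw [h0, show ((0 : 𝓞 K) : K) = 0 by norm_cast, inv_zero, height, heightOn_zero,
      heightOn_zero] at hlt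
    exact lt_irrefl 0 hlt
  have hexists : ∃ P : HeightOneSpectrum (𝓞 K), β ∈ P.asIdeal ∧
      P ∉ {P : HeightOneSpectrum (𝓞 K) |
        ∃ j : ℕ, 1 ≤ j ∧ j ≤ k ∧ (fun x => f.eval x)^[j] (0 : 𝓞 K) ∈ P.asIdeal} := by
    by_contra hcon
    push_neg at hcon
    rw [heightOn_inv_eq hβ _ Set.subset_union_left (fun P hP =>
      Set.mem_union_right _ (Set.mem_image_of_mem _ (hcon P hP)))] at hlt
    exact lt_irrefl _ hlt
  obtain ⟨P, hPmem, hPnot⟩ := hexists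
  refine ⟨P, hPmem, ?_⟩
  intro j hj1 hj2 hjmem
  apply hPnot
  refine ⟨m - j, by omega, by omega, ?_⟩
  have hsplit : (fun x => f.eval x)^[m] α
      = (fun x => f.eval x)^[m - j] ((fun x => f.eval x)^[j] α) := by
    rw [← Function.iterate_add_apply]
    congr 1
    omega
  have h1 : Ideal.Quotient.mk P.asIdeal ((fun x => f.eval x)^[m - j] ((fun x => f.eval x)^[j] α))
      = Ideal.Quotient.mk P.asIdeal ((fun x => f.eval x)^[m - j] (0 : 𝓞 K)) := by
    have hx : Ideal.Quotient.mk P.asIdeal ((fun x => f.eval x)^[j] α) = 0 :=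
      Ideal.Quotient.eq_zero_iff_mem.mpr hjmem
    rw [map_iterate_eval (Ideal.Quotient.mk P.asIdeal) f (m - j) ((fun x => f.eval x)^[j] α),
      map_iterate_eval (Ideal.Quotient.mk P.asIdeal) f (m - j) (0 : 𝓞 K), hx, map_zero]
  have h2 : Ideal.Quotient.mk P.asIdeal ((fun x => f.eval x)^[m - j] (0 : 𝓞 K)) = 0 := by
    rw [← h1, ← hsplit]
    exact Ideal.Quotient.eq_zero_iff_mem.mpr hPmem
  exact Ideal.Quotient.eq_zero_iff_mem.mp h2
end
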